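/- The call-by-value variant of adequacy: defining ‖A→B‖v = { v·e | v ∈ |A|v, e ∈ ‖B‖ } (truth *value* witnesses for the argument) and environments mapping variables to truth value witnesses, if Γ ⊢ t : A and σ(x) ∈ |B|v for each (x:B) ∈ Γ, then the call-by-value translation ⟦t⟧ (with ⟦t u⟧ = μα.⟨⟦u⟧ | μ̃v.⟨⟦t⟧ | v·α⟩⟩) satisfies ⟦t⟧[σ] ∈ |A|. -/

import Mathlib

mutual
/-- μμ̃ machine terms. -/
inductive MTm where
  | var : Nat → MTm
  | mu : MMach → MTm            -- μα.m, binds co-variable 0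
  | muPair : MMach → MTm        -- μ(x·α).m, binds variable 0 and co-variable 0
  | injl : MTm → MTm
  | injr : MTm → MTm
/-- μμ̃ machine co-terms (contexts). -/
inductive MCo where
  | covar : Nat → MCo
  | cons : MTm → MCo → MCo      -- t·e
  | mutilde : MMach → MCo       -- μ̃x.m, binds variable 0
  | case : MMach → MMach → MCo  -- μ̃[inj₁x₁.m₁ | inj₂x₂.m₂], each branch binds variable 0
/-- μμ̃ machine configurations ⟨t | e⟩. -/
inductive MMach where
  | conf : MTm → MCo → MMach
end

/-- Lift a renaming under a binder. -/
def liftN (f : Nat → Nat) : Nat → Nat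
  | 0 => 0
  | n + 1 => f n + 1

mutual
/-- Simultaneous renaming of variables (ft) and co-variables (fc). -/
def MTm.rename (ft fc : Nat → Nat) : MTm → MTm
  | .var n => .var (ft n)
  | .mu m => .mu (MMach.rename ft (liftN fc) m)
  | .muPair m => .muPair (MMach.rename (liftN ft) (liftN fc) m)
  | .injl t => .injl (MTm.rename ft fc t)
  | .injr t => .injr (MTm.rename ft fc t)
def MCo.rename (ft fc : Nat → Nat) : MCo → MCo
  | .covar n => .covar (fc n)
  | .cons t e => .cons (MTm.rename ft fc t) (MCo.rename ft fc e)
  | .mutilde m => .mutilde (MMach.rename (liftN ft) fc m)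
  | .case m₁ m₂ => .case (MMach.rename (liftN ft) fc m₁) (MMach.rename (liftN ft) fc m₂)
def MMach.rename (ft fc : Nat → Nat) : MMach → MMach
  | .conf t e => .conf (MTm.rename ft fc t) (MCo.rename ft fc e)
end

/-- Lift a substitution under a variable binder. -/
def upT (σt : Nat → MTm) (σc : Nat → MCo) : (Nat → MTm) × (Nat → MCo) :=
  (fun n => match n with
    | 0 => .var 0
    | n + 1 => MTm.rename Nat.succ id (σt n),
   fun n => MCo.rename Nat.succ id (σc n))

/-- Lift a substitution under a co-variable binder. -/
def upC (σt : Nat → MTm) (σc : Nat → MCo) : (Nat → MTm) × (Nat → MCo) :=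
  (fun n => MTm.rename id Nat.succ (σt n),
   fun n => match n with
    | 0 => .covar 0
    | n + 1 => MCo.rename id Nat.succ (σc n))

mutual
/-- Simultaneous substitution of terms for variables and co-terms for co-variables. -/
def MTm.subst (σt : Nat → MTm) (σc : Nat → MCo) : MTm → MTm
  | .var n => σt n
  | .mu m => .mu (MMach.subst (upC σt σc).1 (upC σt σc).2 m)
  | .muPair m =>
      .muPair (MMach.subst (upT (upC σt σc).1 (upC σt σc).2).1
                           (upT (upC σt σc).1 (upC σt σc).2).2 m)
  | .injl t => .injl (MTm.subst σt σc t)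
  | .injr t => .injr (MTm.subst σt σc t)
def MCo.subst (σt : Nat → MTm) (σc : Nat → MCo) : MCo → MCo
  | .covar n => σc n
  | .cons t e => .cons (MTm.subst σt σc t) (MCo.subst σt σc e)
  | .mutilde m => .mutilde (MMach.subst (upT σt σc).1 (upT σt σc).2 m)
  | .case m₁ m₂ => .case (MMach.subst (upT σt σc).1 (upT σt σc).2 m₁)
                         (MMach.subst (upT σt σc).1 (upT σt σc).2 m₂)
def MMach.subst (σt : Nat → MTm) (σc : Nat → MCo) : MMach → MMach
  | .conf t e => .conf (MTm.subst σt σc t) (MCo.subst σt σc e)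
end

/-- m[e/α] : substitute co-term `e` for co-variable 0. -/
def MMach.substCo (m : MMach) (e : MCo) : MMach :=
  MMach.subst MTm.var (fun n => match n with | 0 => e | n + 1 => .covar n) m

/-- m[t/x] : substitute term `t` for variable 0. -/
def MMach.substTm (m : MMach) (t : MTm) : MMach :=
  MMach.subst (fun n => match n with | 0 => t | n + 1 => .var n) MCo.covar m

/-- m[t/x, e/α] : substitute both a term and a co-term. -/
def MMach.substTmCo (m : MMach) (t : MTm) (e : MCo) : MMach :=
  MMach.subst (fun n => match n with | 0 => t | n + 1 => .var n)
              (fun n => match n with | 0 => e | n + 1 => .covar n) m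

mutual
/-- Reduction of μμ̃ terms (congruence). -/
inductive StepT : MTm → MTm → Prop
  | mu {m m'} : StepM m m' → StepT (.mu m) (.mu m')
  | muPair {m m'} : StepM m m' → StepT (.muPair m) (.muPair m')
  | injl {t t'} : StepT t t' → StepT (.injl t) (.injl t')
  | injr {t t'} : StepT t t' → StepT (.injr t) (.injr t')
/-- Reduction of μμ̃ co-terms (congruence). -/
inductive StepC : MCo → MCo → Prop
  | consl {t t'} (e) : StepT t t' → StepC (.cons t e) (.cons t' e)
  | consr (t) {e e'} : StepC e e' → StepC (.cons t e) (.cons t e')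
  | mutilde {m m'} : StepM m m' → StepC (.mutilde m) (.mutilde m')
  | casel {m₁ m₁'} (m₂) : StepM m₁ m₁' → StepC (.case m₁ m₂) (.case m₁' m₂)
  | caser (m₁) {m₂ m₂'} : StepM m₂ m₂' → StepC (.case m₁ m₂) (.case m₁ m₂')
/-- Reduction of μμ̃ machine configurations. -/
inductive StepM : MMach → MMach → Prop
  | mu (m : MMach) (e : MCo) : StepM (.conf (.mu m) e) (m.substCo e)
  | mutilde (t : MTm) (m : MMach) : StepM (.conf t (.mutilde m)) (m.substTm t)
  | muPair (m : MMach) (u : MTm) (e : MCo) :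
      StepM (.conf (.muPair m) (.cons u e)) (m.substTmCo u e)
  | casel (t : MTm) (m₁ m₂ : MMach) :
      StepM (.conf (.injl t) (.case m₁ m₂)) (m₁.substTm t)
  | caser (t : MTm) (m₁ m₂ : MMach) :
      StepM (.conf (.injr t) (.case m₁ m₂)) (m₂.substTm t)
  | congT {t t'} (e) : StepT t t' → StepM (.conf t e) (.conf t' e)
  | congC (t) {e e'} : StepC e e' → StepM (.conf t e) (.conf t e')
end

/-- Source λ-calculus with sums (de Bruijn). In `case t u₁ u₂` each branch binds
variable 0. -/
inductive LTm where
  | var : Nat → LTm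
  | lam : LTm → LTm
  | app : LTm → LTm → LTm
  | injl : LTm → LTm
  | injr : LTm → LTm
  | case : LTm → LTm → LTm → LTm

/-- Compilation of λ-terms with sums into the μμ̃ machine (call-by-name). -/
def transl : LTm → MTm
  | .var n => .var n
  | .lam t => .muPair (.conf (transl t) (.covar 0))
  | .app t u => .mu (.conf (transl t) (.cons (transl u) (.covar 0)))
  | .injl t => .injl (transl t)
  | .injr t => .injr (transl t)
  | .case t u₁ u₂ =>
      .mu (.conf (transl t)
        (.case (.conf (transl u₁) (.covar 0)) (.conf (transl u₂) (.covar 0))))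

/-- Simple types: a (positive) base type, function types and sum types. -/
inductive Ty where
  | base : Ty
  | arrow : Ty → Ty → Ty
  | sum : Ty → Ty → Ty

/-- Typing judgment of the simply-typed λ-calculus with sums. -/
inductive HasTy : List Ty → LTm → Ty → Prop
  | var {Γ n A} : Γ[n]? = some A → HasTy Γ (.var n) A
  | lam {Γ t A B} : HasTy (A :: Γ) t B → HasTy Γ (.lam t) (.arrow A B)
  | app {Γ t u A B} : HasTy Γ t (.arrow A B) → HasTy Γ u A → HasTy Γ (.app t u) B
  | injl {Γ t A B} : HasTy Γ t A → HasTy Γ (.injl t) (.sum A B)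
  | injr {Γ t A B} : HasTy Γ t B → HasTy Γ (.injr t) (.sum A B)
  | case {Γ t u₁ u₂ A B C} : HasTy Γ t (.sum A B) → HasTy (A :: Γ) u₁ C →
      HasTy (B :: Γ) u₂ C → HasTy Γ (.case t u₁ u₂) C

/-- Call-by-value compilation of λ-terms into the μμ̃ machine:
⟦t u⟧ = μα.⟨⟦u⟧ | μ̃v.⟨⟦t⟧ | v·α⟩⟩, the other constructs as before. -/
def translV : LTm → MTm
  | .var n => .var n
  | .lam t => .muPair (.conf (translV t) (.covar 0))
  | .app t u =>
      .mu (.conf (translV u)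
        (.mutilde (.conf (MTm.rename Nat.succ id (translV t))
          (.cons (.var 0) (.covar 0)))))
  | .injl t => .injl (translV t)
  | .injr t => .injr (translV t)
  | .case t u₁ u₂ =>
      .mu (.conf (translV t)
        (.case (.conf (translV u₁) (.covar 0)) (.conf (translV u₂) (.covar 0))))

/-- Orthogonal of a set of terms. -/
def orthC (pole : MMach → Prop) (S : Set MTm) : Set MCo :=
  {e | ∀ t ∈ S, pole (.conf t e)}

/-- Orthogonal of a set of co-terms. -/
def orthT (pole : MMach → Prop) (S : Set MCo) : Set MTm :=
  {t | ∀ e ∈ S, pole (.conf t e)}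

mutual
/-- Call-by-value truth witnesses |A|:
for arrows, |A→B| = (‖A→B‖v)⊥ with ‖A→B‖v = { v·e | v ∈ |A|v, e ∈ ‖B‖ }
(truth *value* witnesses for the argument); for positive types (base, sums),
|A| = (|A|v)⊥⊥. Throughout, ‖B‖ = |B|⊥. -/
def tru (pole : MMach → Prop) (baseTruv : Set MTm) : Ty → Set MTm
  | .base => orthT pole (orthC pole baseTruv)
  | .arrow A B =>
      orthT pole {c | ∃ v e, c = .cons v e ∧ v ∈ truv pole baseTruv A ∧
        e ∈ orthC pole (tru pole baseTruv B)}
  | .sum A B =>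
      orthT pole (orthC pole
        {t | (∃ u, t = .injl u ∧ u ∈ tru pole baseTruv A) ∨
             (∃ u, t = .injr u ∧ u ∈ tru pole baseTruv B)})
/-- Truth value witnesses |A|v: for positive types they are the defining sets
of values; for the negative arrow type, |N|v = |N|. -/
def truv (pole : MMach → Prop) (baseTruv : Set MTm) : Ty → Set MTm
  | .base => baseTruv
  | .arrow A B =>
      orthT pole {c | ∃ v e, c = .cons v e ∧ v ∈ truv pole baseTruv A ∧
        e ∈ orthC pole (tru pole baseTruv B)}
  | .sum A B =>
      {t | (∃ u, t = .injl u ∧ u ∈ tru pole baseTruv A) ∨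
           (∃ u, t = .injr u ∧ u ∈ tru pole baseTruv B)}
end

namespace Adeq

theorem liftN_comp {f1 f2 h : Nat → Nat} (hf : ∀ n, f2 (f1 n) = h n) :
    ∀ n, liftN f2 (liftN f1 n) = liftN h n
  | 0 => rfl
  | n + 1 => by simp [liftN, hf]

mutual
theorem ren_ren_t {f1 g1 f2 g2 h k : Nat → Nat}
    (hf : ∀ n, f2 (f1 n) = h n) (hg : ∀ n, g2 (g1 n) = k n) :
    ∀ t : MTm, MTm.rename f2 g2 (MTm.rename f1 g1 t) = MTm.rename h k t
  | .var n => by simp [MTm.rename, hf]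
  | .mu m => by simp [MTm.rename, ren_ren_m hf (liftN_comp hg) m]
  | .muPair m => by simp [MTm.rename, ren_ren_m (liftN_comp hf) (liftN_comp hg) m]
  | .injl t => by simp [MTm.rename, ren_ren_t hf hg t]
  | .injr t => by simp [MTm.rename, ren_ren_t hf hg t]
theorem ren_ren_c {f1 g1 f2 g2 h k : Nat → Nat}
    (hf : ∀ n, f2 (f1 n) = h n) (hg : ∀ n, g2 (g1 n) = k n) :
    ∀ e : MCo, MCo.rename f2 g2 (MCo.rename f1 g1 e) = MCo.rename h k e
  | .covar n => by simp [MCo.rename, hg]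
  | .cons t e => by simp [MCo.rename, ren_ren_t hf hg t, ren_ren_c hf hg e]
  | .mutilde m => by simp [MCo.rename, ren_ren_m (liftN_comp hf) hg m]
  | .case m1 m2 => by
      simp [MCo.rename, ren_ren_m (liftN_comp hf) hg m1, ren_ren_m (liftN_comp hf) hg m2]
theorem ren_ren_m {f1 g1 f2 g2 h k : Nat → Nat}
    (hf : ∀ n, f2 (f1 n) = h n) (hg : ∀ n, g2 (g1 n) = k n) :
    ∀ m : MMach, MMach.rename f2 g2 (MMach.rename f1 g1 m) = MMach.rename h k m
  | .conf t e => by simp [MMach.rename, ren_ren_t hf hg t, ren_ren_c hf hg e]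
end

/- ## sub_ren : subst after rename -/
section
variable {f g : Nat → Nat} {σt τt : Nat → MTm} {σc τc : Nat → MCo}

theorem upC1_sr (ht : ∀ n, σt (f n) = τt n) (σc τc : Nat → MCo) :
    ∀ n, (upC σt σc).1 (f n) = (upC τt τc).1 n := by
  intro n; show MTm.rename id Nat.succ (σt (f n)) = _; rw [ht]; rfl

theorem upC2_sr (hc : ∀ n, σc (g n) = τc n) (σt τt : Nat → MTm) :
    ∀ n, (upC σt σc).2 (liftN g n) = (upC τt τc).2 n
  | 0 => rfl
  | n + 1 => by show MCo.rename id Nat.succ (σc (g n)) = _; rw [hc]; rfl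

theorem upT1_sr (ht : ∀ n, σt (f n) = τt n) (σc τc : Nat → MCo) :
    ∀ n, (upT σt σc).1 (liftN f n) = (upT τt τc).1 n
  | 0 => rfl
  | n + 1 => by show MTm.rename Nat.succ id (σt (f n)) = _; rw [ht]; rfl

theorem upT2_sr (hc : ∀ n, σc (g n) = τc n) (σt τt : Nat → MTm) :
    ∀ n, (upT σt σc).2 (g n) = (upT τt τc).2 n := by
  intro n; show MCo.rename Nat.succ id (σc (g n)) = _; rw [hc]; rfl

end

mutual
theorem sub_ren_t {f g : Nat → Nat} {σt τt : Nat → MTm} {σc τc : Nat → MCo}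
    (ht : ∀ n, σt (f n) = τt n) (hc : ∀ n, σc (g n) = τc n) :
    ∀ t : MTm, MTm.subst σt σc (MTm.rename f g t) = MTm.subst τt τc t
  | .var n => by simp [MTm.rename, MTm.subst, ht]
  | .mu m => by
      simp [MTm.rename, MTm.subst,
        sub_ren_m (upC1_sr ht σc τc) (upC2_sr hc σt τt) m]
  | .muPair m => by
      simp only [MTm.rename, MTm.subst]
      exact congrArg MTm.muPair
        (sub_ren_m (upT1_sr (upC1_sr ht σc τc) _ _) (upT2_sr (upC2_sr hc σt τt) _ _) m)
  | .injl t => by simp [MTm.rename, MTm.subst, sub_ren_t ht hc t]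
  | .injr t => by simp [MTm.rename, MTm.subst, sub_ren_t ht hc t]
theorem sub_ren_c {f g : Nat → Nat} {σt τt : Nat → MTm} {σc τc : Nat → MCo}
    (ht : ∀ n, σt (f n) = τt n) (hc : ∀ n, σc (g n) = τc n) :
    ∀ e : MCo, MCo.subst σt σc (MCo.rename f g e) = MCo.subst τt τc e
  | .covar n => by simp [MCo.rename, MCo.subst, hc]
  | .cons t e => by simp [MCo.rename, MCo.subst, sub_ren_t ht hc t, sub_ren_c ht hc e]
  | .mutilde m => by
      simp [MCo.rename, MCo.subst,
        sub_ren_m (upT1_sr ht σc τc) (upT2_sr hc σt τt) m]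
  | .case m1 m2 => by
      simp [MCo.rename, MCo.subst,
        sub_ren_m (upT1_sr ht σc τc) (upT2_sr hc σt τt) m1,
        sub_ren_m (upT1_sr ht σc τc) (upT2_sr hc σt τt) m2]
theorem sub_ren_m {f g : Nat → Nat} {σt τt : Nat → MTm} {σc τc : Nat → MCo}
    (ht : ∀ n, σt (f n) = τt n) (hc : ∀ n, σc (g n) = τc n) :
    ∀ m : MMach, MMach.subst σt σc (MMach.rename f g m) = MMach.subst τt τc m
  | .conf t e => by simp [MMach.rename, MMach.subst, sub_ren_t ht hc t, sub_ren_c ht hc e]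
end

/- ## ren_sub : rename after subst -/
section
variable {f g : Nat → Nat} {σt τt : Nat → MTm} {σc τc : Nat → MCo}

theorem upC1_rs (ht : ∀ n, MTm.rename f g (σt n) = τt n) (σc τc : Nat → MCo) :
    ∀ n, MTm.rename f (liftN g) ((upC σt σc).1 n) = (upC τt τc).1 n := by
  intro n
  calc MTm.rename f (liftN g) (MTm.rename id Nat.succ (σt n))
      = MTm.rename f (fun n => g n + 1) (σt n) := by exact ren_ren_t (fun _ => rfl) (fun _ => rfl) _
    _ = MTm.rename id Nat.succ (MTm.rename f g (σt n)) := by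
        exact (ren_ren_t (f1 := f) (g1 := g) (f2 := id) (g2 := Nat.succ)
          (fun _ => rfl) (fun _ => rfl) _).symm
    _ = (upC τt τc).1 n := by rw [ht]; rfl

theorem upC2_rs (hc : ∀ n, MCo.rename f g (σc n) = τc n) (σt τt : Nat → MTm) :
    ∀ n, MCo.rename f (liftN g) ((upC σt σc).2 n) = (upC τt τc).2 n
  | 0 => rfl
  | n + 1 => by
    calc MCo.rename f (liftN g) (MCo.rename id Nat.succ (σc n))
        = MCo.rename f (fun n => g n + 1) (σc n) := by exact ren_ren_c (fun _ => rfl) (fun _ => rfl) _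
      _ = MCo.rename id Nat.succ (MCo.rename f g (σc n)) := by
          exact (ren_ren_c (f1 := f) (g1 := g) (f2 := id) (g2 := Nat.succ)
            (fun _ => rfl) (fun _ => rfl) _).symm
      _ = (upC τt τc).2 (n + 1) := by rw [hc]; rfl

theorem upT1_rs (ht : ∀ n, MTm.rename f g (σt n) = τt n) (σc τc : Nat → MCo) :
    ∀ n, MTm.rename (liftN f) g ((upT σt σc).1 n) = (upT τt τc).1 n
  | 0 => rfl
  | n + 1 => by
    calc MTm.rename (liftN f) g (MTm.rename Nat.succ id (σt n))
        = MTm.rename (fun n => f n + 1) g (σt n) := by exact ren_ren_t (fun _ => rfl) (fun _ => rfl) _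
      _ = MTm.rename Nat.succ id (MTm.rename f g (σt n)) := by
          exact (ren_ren_t (f1 := f) (g1 := g) (f2 := Nat.succ) (g2 := id)
            (fun _ => rfl) (fun _ => rfl) _).symm
      _ = (upT τt τc).1 (n + 1) := by rw [ht]; rfl

theorem upT2_rs (hc : ∀ n, MCo.rename f g (σc n) = τc n) (σt τt : Nat → MTm) :
    ∀ n, MCo.rename (liftN f) g ((upT σt σc).2 n) = (upT τt τc).2 n := by
  intro n
  calc MCo.rename (liftN f) g (MCo.rename Nat.succ id (σc n))
      = MCo.rename (fun n => f n + 1) g (σc n) := by exact ren_ren_c (fun _ => rfl) (fun _ => rfl) _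
    _ = MCo.rename Nat.succ id (MCo.rename f g (σc n)) := by
        exact (ren_ren_c (f1 := f) (g1 := g) (f2 := Nat.succ) (g2 := id)
          (fun _ => rfl) (fun _ => rfl) _).symm
    _ = (upT τt τc).2 n := by rw [hc]; rfl

end

mutual
theorem ren_sub_t {f g : Nat → Nat} {σt τt : Nat → MTm} {σc τc : Nat → MCo}
    (ht : ∀ n, MTm.rename f g (σt n) = τt n) (hc : ∀ n, MCo.rename f g (σc n) = τc n) :
    ∀ t : MTm, MTm.rename f g (MTm.subst σt σc t) = MTm.subst τt τc t
  | .var n => by simp [MTm.rename, MTm.subst, ht]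
  | .mu m => by
      simp [MTm.rename, MTm.subst,
        ren_sub_m (upC1_rs ht σc τc) (upC2_rs hc σt τt) m]
  | .muPair m => by
      simp only [MTm.rename, MTm.subst]
      exact congrArg MTm.muPair
        (ren_sub_m (upT1_rs (upC1_rs ht σc τc) _ _) (upT2_rs (upC2_rs hc σt τt) _ _) m)
  | .injl t => by simp [MTm.rename, MTm.subst, ren_sub_t ht hc t]
  | .injr t => by simp [MTm.rename, MTm.subst, ren_sub_t ht hc t]
theorem ren_sub_c {f g : Nat → Nat} {σt τt : Nat → MTm} {σc τc : Nat → MCo}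
    (ht : ∀ n, MTm.rename f g (σt n) = τt n) (hc : ∀ n, MCo.rename f g (σc n) = τc n) :
    ∀ e : MCo, MCo.rename f g (MCo.subst σt σc e) = MCo.subst τt τc e
  | .covar n => by simp [MCo.rename, MCo.subst, hc]
  | .cons t e => by simp [MCo.rename, MCo.subst, ren_sub_t ht hc t, ren_sub_c ht hc e]
  | .mutilde m => by
      simp [MCo.rename, MCo.subst,
        ren_sub_m (upT1_rs ht σc τc) (upT2_rs hc σt τt) m]
  | .case m1 m2 => by
      simp [MCo.rename, MCo.subst,
        ren_sub_m (upT1_rs ht σc τc) (upT2_rs hc σt τt) m1,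
        ren_sub_m (upT1_rs ht σc τc) (upT2_rs hc σt τt) m2]
theorem ren_sub_m {f g : Nat → Nat} {σt τt : Nat → MTm} {σc τc : Nat → MCo}
    (ht : ∀ n, MTm.rename f g (σt n) = τt n) (hc : ∀ n, MCo.rename f g (σc n) = τc n) :
    ∀ m : MMach, MMach.rename f g (MMach.subst σt σc m) = MMach.subst τt τc m
  | .conf t e => by simp [MMach.rename, MMach.subst, ren_sub_t ht hc t, ren_sub_c ht hc e]
end

/- ## sub_sub : subst after subst -/
section
variable {σt τt ρt : Nat → MTm} {σc τc ρc : Nat → MCo}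

theorem upC1_ss (ht : ∀ n, MTm.subst τt τc (σt n) = ρt n) (σc : Nat → MCo) (ρc : Nat → MCo) :
    ∀ n, MTm.subst (upC τt τc).1 (upC τt τc).2 ((upC σt σc).1 n) = (upC ρt ρc).1 n := by
  intro n
  calc MTm.subst (upC τt τc).1 (upC τt τc).2 (MTm.rename id Nat.succ (σt n))
      = MTm.subst (fun n => MTm.rename id Nat.succ (τt n))
          (fun n => MCo.rename id Nat.succ (τc n)) (σt n) :=
        sub_ren_t (fun _ => rfl) (fun _ => rfl) _
    _ = MTm.rename id Nat.succ (MTm.subst τt τc (σt n)) :=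
        by exact (ren_sub_t (fun _ => rfl) (fun _ => rfl) _).symm
    _ = (upC ρt ρc).1 n := by rw [ht]; rfl

theorem upC2_ss (hc : ∀ n, MCo.subst τt τc (σc n) = ρc n) (σt : Nat → MTm) (ρt : Nat → MTm) :
    ∀ n, MCo.subst (upC τt τc).1 (upC τt τc).2 ((upC σt σc).2 n) = (upC ρt ρc).2 n
  | 0 => rfl
  | n + 1 => by
    calc MCo.subst (upC τt τc).1 (upC τt τc).2 (MCo.rename id Nat.succ (σc n))
        = MCo.subst (fun n => MTm.rename id Nat.succ (τt n))
            (fun n => MCo.rename id Nat.succ (τc n)) (σc n) :=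
          sub_ren_c (fun _ => rfl) (fun _ => rfl) _
      _ = MCo.rename id Nat.succ (MCo.subst τt τc (σc n)) :=
          by exact (ren_sub_c (fun _ => rfl) (fun _ => rfl) _).symm
      _ = (upC ρt ρc).2 (n + 1) := by rw [hc]; rfl

theorem upT1_ss (ht : ∀ n, MTm.subst τt τc (σt n) = ρt n) (σc : Nat → MCo) (ρc : Nat → MCo) :
    ∀ n, MTm.subst (upT τt τc).1 (upT τt τc).2 ((upT σt σc).1 n) = (upT ρt ρc).1 n
  | 0 => rfl
  | n + 1 => by
    calc MTm.subst (upT τt τc).1 (upT τt τc).2 (MTm.rename Nat.succ id (σt n))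
        = MTm.subst (fun n => MTm.rename Nat.succ id (τt n))
            (fun n => MCo.rename Nat.succ id (τc n)) (σt n) :=
          sub_ren_t (fun _ => rfl) (fun _ => rfl) _
      _ = MTm.rename Nat.succ id (MTm.subst τt τc (σt n)) :=
          by exact (ren_sub_t (fun _ => rfl) (fun _ => rfl) _).symm
      _ = (upT ρt ρc).1 (n + 1) := by rw [ht]; rfl

theorem upT2_ss (hc : ∀ n, MCo.subst τt τc (σc n) = ρc n) (σt : Nat → MTm) (ρt : Nat → MTm) :
    ∀ n, MCo.subst (upT τt τc).1 (upT τt τc).2 ((upT σt σc).2 n) = (upT ρt ρc).2 n := by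
  intro n
  calc MCo.subst (upT τt τc).1 (upT τt τc).2 (MCo.rename Nat.succ id (σc n))
      = MCo.subst (fun n => MTm.rename Nat.succ id (τt n))
          (fun n => MCo.rename Nat.succ id (τc n)) (σc n) :=
        sub_ren_c (fun _ => rfl) (fun _ => rfl) _
    _ = MCo.rename Nat.succ id (MCo.subst τt τc (σc n)) :=
        by exact (ren_sub_c (fun _ => rfl) (fun _ => rfl) _).symm
    _ = (upT ρt ρc).2 n := by rw [hc]; rfl

end

mutual
theorem sub_sub_t {σt τt ρt : Nat → MTm} {σc τc ρc : Nat → MCo}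
    (ht : ∀ n, MTm.subst τt τc (σt n) = ρt n) (hc : ∀ n, MCo.subst τt τc (σc n) = ρc n) :
    ∀ t : MTm, MTm.subst τt τc (MTm.subst σt σc t) = MTm.subst ρt ρc t
  | .var n => by simp [MTm.subst, ht]
  | .mu m => by
      simp [MTm.subst, sub_sub_m (upC1_ss ht σc ρc) (upC2_ss hc σt ρt) m]
  | .muPair m => by
      simp only [MTm.subst]
      exact congrArg MTm.muPair
        (sub_sub_m (upT1_ss (upC1_ss ht σc ρc) _ _) (upT2_ss (upC2_ss hc σt ρt) _ _) m)
  | .injl t => by simp [MTm.subst, sub_sub_t ht hc t]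
  | .injr t => by simp [MTm.subst, sub_sub_t ht hc t]
theorem sub_sub_c {σt τt ρt : Nat → MTm} {σc τc ρc : Nat → MCo}
    (ht : ∀ n, MTm.subst τt τc (σt n) = ρt n) (hc : ∀ n, MCo.subst τt τc (σc n) = ρc n) :
    ∀ e : MCo, MCo.subst τt τc (MCo.subst σt σc e) = MCo.subst ρt ρc e
  | .covar n => by simp [MCo.subst, hc]
  | .cons t e => by simp [MCo.subst, sub_sub_t ht hc t, sub_sub_c ht hc e]
  | .mutilde m => by
      simp [MCo.subst, sub_sub_m (upT1_ss ht σc ρc) (upT2_ss hc σt ρt) m]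
  | .case m1 m2 => by
      simp [MCo.subst, sub_sub_m (upT1_ss ht σc ρc) (upT2_ss hc σt ρt) m1,
        sub_sub_m (upT1_ss ht σc ρc) (upT2_ss hc σt ρt) m2]
theorem sub_sub_m {σt τt ρt : Nat → MTm} {σc τc ρc : Nat → MCo}
    (ht : ∀ n, MTm.subst τt τc (σt n) = ρt n) (hc : ∀ n, MCo.subst τt τc (σc n) = ρc n) :
    ∀ m : MMach, MMach.subst τt τc (MMach.subst σt σc m) = MMach.subst ρt ρc m
  | .conf t e => by simp [MMach.subst, sub_sub_t ht hc t, sub_sub_c ht hc e]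
end

/- ## sub_id -/
section
variable {σt : Nat → MTm} {σc : Nat → MCo}

theorem upC1_id (ht : ∀ n, σt n = .var n) (σc : Nat → MCo) :
    ∀ n, (upC σt σc).1 n = MTm.var n := by
  intro n; show MTm.rename id Nat.succ (σt n) = _; rw [ht]; rfl

theorem upC2_id (hc : ∀ n, σc n = .covar n) (σt : Nat → MTm) :
    ∀ n, (upC σt σc).2 n = MCo.covar n
  | 0 => rfl
  | n + 1 => by show MCo.rename id Nat.succ (σc n) = _; rw [hc]; rfl

theorem upT1_id (ht : ∀ n, σt n = .var n) (σc : Nat → MCo) :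
    ∀ n, (upT σt σc).1 n = MTm.var n
  | 0 => rfl
  | n + 1 => by show MTm.rename Nat.succ id (σt n) = _; rw [ht]; rfl

theorem upT2_id (hc : ∀ n, σc n = .covar n) (σt : Nat → MTm) :
    ∀ n, (upT σt σc).2 n = MCo.covar n := by
  intro n; show MCo.rename Nat.succ id (σc n) = _; rw [hc]; rfl

end

mutual
theorem sub_id_t {σt : Nat → MTm} {σc : Nat → MCo}
    (ht : ∀ n, σt n = .var n) (hc : ∀ n, σc n = .covar n) :
    ∀ t : MTm, MTm.subst σt σc t = t
  | .var n => by simp [MTm.subst, ht]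
  | .mu m => by simp [MTm.subst, sub_id_m (upC1_id ht σc) (upC2_id hc σt) m]
  | .muPair m => by
      simp [MTm.subst, sub_id_m (upT1_id (upC1_id ht σc) _) (upT2_id (upC2_id hc σt) _) m]
  | .injl t => by simp [MTm.subst, sub_id_t ht hc t]
  | .injr t => by simp [MTm.subst, sub_id_t ht hc t]
theorem sub_id_c {σt : Nat → MTm} {σc : Nat → MCo}
    (ht : ∀ n, σt n = .var n) (hc : ∀ n, σc n = .covar n) :
    ∀ e : MCo, MCo.subst σt σc e = e
  | .covar n => by simp [MCo.subst, hc]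
  | .cons t e => by simp [MCo.subst, sub_id_t ht hc t, sub_id_c ht hc e]
  | .mutilde m => by simp [MCo.subst, sub_id_m (upT1_id ht σc) (upT2_id hc σt) m]
  | .case m1 m2 => by
      simp [MCo.subst, sub_id_m (upT1_id ht σc) (upT2_id hc σt) m1,
        sub_id_m (upT1_id ht σc) (upT2_id hc σt) m2]
theorem sub_id_m {σt : Nat → MTm} {σc : Nat → MCo}
    (ht : ∀ n, σt n = .var n) (hc : ∀ n, σc n = .covar n) :
    ∀ m : MMach, MMach.subst σt σc m = m
  | .conf t e => by simp [MMach.subst, sub_id_t ht hc t, sub_id_c ht hc e]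
end

/- ## subst by variables = rename -/
section
variable {f g : Nat → Nat} {σt : Nat → MTm} {σc : Nat → MCo}

theorem upC1_v (ht : ∀ n, σt n = .var (f n)) (σc : Nat → MCo) :
    ∀ n, (upC σt σc).1 n = MTm.var (f n) := by
  intro n; show MTm.rename id Nat.succ (σt n) = _; rw [ht]; rfl

theorem upC2_v (hc : ∀ n, σc n = .covar (g n)) (σt : Nat → MTm) :
    ∀ n, (upC σt σc).2 n = MCo.covar (liftN g n)
  | 0 => rfl
  | n + 1 => by show MCo.rename id Nat.succ (σc n) = _; rw [hc]; rfl

theorem upT1_v (ht : ∀ n, σt n = .var (f n)) (σc : Nat → MCo) :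
    ∀ n, (upT σt σc).1 n = MTm.var (liftN f n)
  | 0 => rfl
  | n + 1 => by show MTm.rename Nat.succ id (σt n) = _; rw [ht]; rfl

theorem upT2_v (hc : ∀ n, σc n = .covar (g n)) (σt : Nat → MTm) :
    ∀ n, (upT σt σc).2 n = MCo.covar (g n) := by
  intro n; show MCo.rename Nat.succ id (σc n) = _; rw [hc]; rfl

end

mutual
theorem sub_var_t {f g : Nat → Nat} {σt : Nat → MTm} {σc : Nat → MCo}
    (ht : ∀ n, σt n = .var (f n)) (hc : ∀ n, σc n = .covar (g n)) :
    ∀ t : MTm, MTm.subst σt σc t = MTm.rename f g t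
  | .var n => by simp [MTm.subst, MTm.rename, ht]
  | .mu m => by simp [MTm.subst, MTm.rename, sub_var_m (upC1_v ht σc) (upC2_v hc σt) m]
  | .muPair m => by
      simp [MTm.subst, MTm.rename,
        sub_var_m (upT1_v (upC1_v ht σc) _) (upT2_v (upC2_v hc σt) _) m]
  | .injl t => by simp [MTm.subst, MTm.rename, sub_var_t ht hc t]
  | .injr t => by simp [MTm.subst, MTm.rename, sub_var_t ht hc t]
theorem sub_var_c {f g : Nat → Nat} {σt : Nat → MTm} {σc : Nat → MCo}
    (ht : ∀ n, σt n = .var (f n)) (hc : ∀ n, σc n = .covar (g n)) :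
    ∀ e : MCo, MCo.subst σt σc e = MCo.rename f g e
  | .covar n => by simp [MCo.subst, MCo.rename, hc]
  | .cons t e => by simp [MCo.subst, MCo.rename, sub_var_t ht hc t, sub_var_c ht hc e]
  | .mutilde m => by
      simp [MCo.subst, MCo.rename, sub_var_m (upT1_v ht σc) (upT2_v hc σt) m]
  | .case m1 m2 => by
      simp [MCo.subst, MCo.rename, sub_var_m (upT1_v ht σc) (upT2_v hc σt) m1,
        sub_var_m (upT1_v ht σc) (upT2_v hc σt) m2]
theorem sub_var_m {f g : Nat → Nat} {σt : Nat → MTm} {σc : Nat → MCo}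
    (ht : ∀ n, σt n = .var (f n)) (hc : ∀ n, σc n = .covar (g n)) :
    ∀ m : MMach, MMach.subst σt σc m = MMach.rename f g m
  | .conf t e => by simp [MMach.subst, MMach.rename, sub_var_t ht hc t, sub_var_c ht hc e]
end

/- ## Semantic lemmas -/

theorem truv_sub_tru (pole : MMach → Prop) (baseTruv : Set MTm) (A : Ty) {t : MTm}
    (h : t ∈ truv pole baseTruv A) : t ∈ tru pole baseTruv A := by
  cases A with
  | base => intro e he; exact he t h
  | arrow A B => exact h
  | sum A B => intro e he; exact he t h

theorem tru_elim (pole : MMach → Prop) (baseTruv : Set MTm) (A : Ty) {t : MTm} {e : MCo}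
    (ht : t ∈ tru pole baseTruv A) (he : e ∈ orthC pole (truv pole baseTruv A)) :
    pole (.conf t e) := by
  cases A with
  | base => exact ht e he
  | arrow A B => exact he t ht
  | sum A B => exact ht e he

theorem tru_intro (pole : MMach → Prop) (baseTruv : Set MTm) (A : Ty) {t : MTm}
    (h : ∀ e ∈ orthC pole (truv pole baseTruv A), pole (.conf t e)) :
    t ∈ tru pole baseTruv A := by
  cases A with
  | base => exact h
  | arrow A B => intro c hc; exact h c (fun t' ht' => ht' c hc)
  | sum A B => exact h

theorem orthC_truv_tru (pole : MMach → Prop) (baseTruv : Set MTm) (A : Ty) {e : MCo}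
    (he : e ∈ orthC pole (truv pole baseTruv A)) : e ∈ orthC pole (tru pole baseTruv A) :=
  fun _t ht => tru_elim pole baseTruv A ht he

/- ## translV has no free co-variables -/

theorem translV_coirrel : ∀ (t : LTm) (σt : Nat → MTm) (σc σc' : Nat → MCo),
    MTm.subst σt σc (translV t) = MTm.subst σt σc' (translV t)
  | .var _, _, _, _ => rfl
  | .lam t, σt, σc, σc' => by
      show MTm.muPair (.conf (MTm.subst (upT (upC σt σc).1 (upC σt σc).2).1
              (upT (upC σt σc).1 (upC σt σc).2).2 (translV t)) (.covar 0))
         = MTm.muPair (.conf (MTm.subst (upT (upC σt σc).1 (upC σt σc).2).1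
              (upT (upC σt σc').1 (upC σt σc').2).2 (translV t)) (.covar 0))
      rw [translV_coirrel t (upT (upC σt σc).1 (upC σt σc).2).1
            (upT (upC σt σc).1 (upC σt σc).2).2 (upT (upC σt σc').1 (upC σt σc').2).2]
  | .app t u, σt, σc, σc' => by
      show MTm.mu (.conf
          (MTm.subst (upC σt σc).1 (upC σt σc).2 (translV u))
          (.mutilde (.conf
            (MTm.subst (upT (upC σt σc).1 (upC σt σc).2).1 (upT (upC σt σc).1 (upC σt σc).2).2
              (MTm.rename Nat.succ id (translV t)))
            (.cons (.var 0) (.covar 0)))))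
        = MTm.mu (.conf
          (MTm.subst (upC σt σc).1 (upC σt σc').2 (translV u))
          (.mutilde (.conf
            (MTm.subst (upT (upC σt σc).1 (upC σt σc).2).1 (upT (upC σt σc').1 (upC σt σc').2).2
              (MTm.rename Nat.succ id (translV t)))
            (.cons (.var 0) (.covar 0)))))
      rw [translV_coirrel u (upC σt σc).1 (upC σt σc).2 (upC σt σc').2]
      rw [sub_ren_t (f := Nat.succ) (g := id)
            (τt := fun n => (upT (upC σt σc).1 (upC σt σc).2).1 (n+1))
            (τc := (upT (upC σt σc).1 (upC σt σc).2).2)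
            (fun _ => rfl) (fun _ => rfl) (translV t),
          sub_ren_t (f := Nat.succ) (g := id)
            (τt := fun n => (upT (upC σt σc).1 (upC σt σc).2).1 (n+1))
            (τc := (upT (upC σt σc').1 (upC σt σc').2).2)
            (fun _ => rfl) (fun _ => rfl) (translV t),
          translV_coirrel t (fun n => (upT (upC σt σc).1 (upC σt σc).2).1 (n+1))
            (upT (upC σt σc).1 (upC σt σc).2).2 (upT (upC σt σc').1 (upC σt σc').2).2]
  | .injl t, σt, σc, σc' => by
      show MTm.injl (MTm.subst σt σc (translV t)) = MTm.injl (MTm.subst σt σc' (translV t))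
      rw [translV_coirrel t σt σc σc']
  | .injr t, σt, σc, σc' => by
      show MTm.injr (MTm.subst σt σc (translV t)) = MTm.injr (MTm.subst σt σc' (translV t))
      rw [translV_coirrel t σt σc σc']
  | .case t u₁ u₂, σt, σc, σc' => by
      show MTm.mu (.conf (MTm.subst (upC σt σc).1 (upC σt σc).2 (translV t))
            (.case (.conf (MTm.subst (upT (upC σt σc).1 (upC σt σc).2).1
                      (upT (upC σt σc).1 (upC σt σc).2).2 (translV u₁)) (.covar 0))
                   (.conf (MTm.subst (upT (upC σt σc).1 (upC σt σc).2).1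
                      (upT (upC σt σc).1 (upC σt σc).2).2 (translV u₂)) (.covar 0))))
         = MTm.mu (.conf (MTm.subst (upC σt σc).1 (upC σt σc').2 (translV t))
            (.case (.conf (MTm.subst (upT (upC σt σc).1 (upC σt σc).2).1
                      (upT (upC σt σc').1 (upC σt σc').2).2 (translV u₁)) (.covar 0))
                   (.conf (MTm.subst (upT (upC σt σc).1 (upC σt σc).2).1
                      (upT (upC σt σc').1 (upC σt σc').2).2 (translV u₂)) (.covar 0))))
      rw [translV_coirrel t (upC σt σc).1 (upC σt σc).2 (upC σt σc').2,
          translV_coirrel u₁ (upT (upC σt σc).1 (upC σt σc).2).1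
            (upT (upC σt σc).1 (upC σt σc).2).2 (upT (upC σt σc').1 (upC σt σc').2).2,
          translV_coirrel u₂ (upT (upC σt σc).1 (upC σt σc).2).1
            (upT (upC σt σc).1 (upC σt σc).2).2 (upT (upC σt σc').1 (upC σt σc').2).2]

/- ## Key substitution computations -/

def scons (t : MTm) (σ : Nat → MTm) : Nat → MTm
  | 0 => t
  | n + 1 => σ n

def econs (e : MCo) (σ : Nat → MCo) : Nat → MCo
  | 0 => e
  | n + 1 => σ n

theorem conf_congr {a a' : MTm} {b b' : MCo} (h1 : a = a') (h2 : b = b') :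
    MMach.conf a b = MMach.conf a' b' := by rw [h1, h2]

/-- K1: the machine step for a translated λ-abstraction against a stack v·e. -/
theorem K1 (σ : Nat → MTm) (X : MTm) (v : MTm) (e : MCo) :
    MMach.substTmCo (.conf (MTm.subst (upT (upC σ MCo.covar).1 (upC σ MCo.covar).2).1
        (upT (upC σ MCo.covar).1 (upC σ MCo.covar).2).2 X) (.covar 0)) v e
      = .conf (MTm.subst (scons v σ) (econs e MCo.covar) X) e := by
  have h1 : ∀ n, MTm.subst (fun n => match n with | 0 => v | n+1 => MTm.var n)
      (fun n => match n with | 0 => e | n+1 => MCo.covar n)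
      ((upT (upC σ MCo.covar).1 (upC σ MCo.covar).2).1 n) = scons v σ n := by
    intro n
    match n with
    | 0 => rfl
    | n + 1 =>
      show MTm.subst _ _ (MTm.rename Nat.succ id (MTm.rename id Nat.succ (σ n))) = σ n
      rw [ren_ren_t (f1 := id) (g1 := Nat.succ) (f2 := Nat.succ) (g2 := id) (h := Nat.succ) (k := Nat.succ) (fun _ => rfl) (fun _ => rfl) (σ n),
          sub_ren_t (f := Nat.succ) (g := Nat.succ) (τt := MTm.var) (τc := MCo.covar)
            (fun _ => rfl) (fun _ => rfl) (σ n)]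
      exact sub_id_t (fun _ => rfl) (fun _ => rfl) (σ n)
  have h2 : ∀ n, MCo.subst (fun n => match n with | 0 => v | n+1 => MTm.var n)
      (fun n => match n with | 0 => e | n+1 => MCo.covar n)
      ((upT (upC σ MCo.covar).1 (upC σ MCo.covar).2).2 n) = econs e MCo.covar n := by
    intro n; match n with | 0 => rfl | n + 1 => rfl
  exact conf_congr (sub_sub_t h1 h2 X) rfl

/-- K2: the μ-step of a translated application. -/
theorem K2 (σ : Nat → MTm) (X Y : MTm) (e : MCo) :
    MMach.substCo (.conf (MTm.subst (upC σ MCo.covar).1 (upC σ MCo.covar).2 Y)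
      (.mutilde (.conf
        (MTm.subst (upT (upC σ MCo.covar).1 (upC σ MCo.covar).2).1
                   (upT (upC σ MCo.covar).1 (upC σ MCo.covar).2).2
          (MTm.rename Nat.succ id X))
        (.cons (.var 0) (.covar 0))))) e
    = .conf (MTm.subst σ (econs e MCo.covar) Y)
        (.mutilde (.conf
          (MTm.subst (fun n => MTm.rename Nat.succ id (σ n))
            (econs (MCo.rename Nat.succ id e) MCo.covar) X)
          (.cons (.var 0) (MCo.rename Nat.succ id e)))) := by
  have hY1 : ∀ n, MTm.subst MTm.var (fun n => match n with | 0 => e | n+1 => MCo.covar n)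
      ((upC σ MCo.covar).1 n) = σ n := by
    intro n
    show MTm.subst _ _ (MTm.rename id Nat.succ (σ n)) = σ n
    rw [sub_ren_t (f := id) (g := Nat.succ) (τt := MTm.var) (τc := MCo.covar)
          (fun _ => rfl) (fun _ => rfl) (σ n)]
    exact sub_id_t (fun _ => rfl) (fun _ => rfl) (σ n)
  have hY2 : ∀ n, MCo.subst MTm.var (fun n => match n with | 0 => e | n+1 => MCo.covar n)
      ((upC σ MCo.covar).2 n) = econs e MCo.covar n := by
    intro n; match n with | 0 => rfl | n + 1 => rfl
  have hX1 : ∀ n, MTm.subst (upT MTm.var (fun n => match n with | 0 => e | n+1 => MCo.covar n)).1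
      (upT MTm.var (fun n => match n with | 0 => e | n+1 => MCo.covar n)).2
      ((upT (upC σ MCo.covar).1 (upC σ MCo.covar).2).1 (n + 1))
      = MTm.rename Nat.succ id (σ n) := by
    intro n
    show MTm.subst _ _ (MTm.rename Nat.succ id (MTm.rename id Nat.succ (σ n))) = _
    rw [ren_ren_t (f1 := id) (g1 := Nat.succ) (f2 := Nat.succ) (g2 := id) (h := Nat.succ) (k := Nat.succ) (fun _ => rfl) (fun _ => rfl) (σ n),
        sub_ren_t (f := Nat.succ) (g := Nat.succ)
          (σt := (upT MTm.var (fun n => match n with | 0 => e | n+1 => MCo.covar n)).1)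
          (σc := (upT MTm.var (fun n => match n with | 0 => e | n+1 => MCo.covar n)).2)
          (τt := fun n => MTm.var (n+1)) (τc := MCo.covar)
          (fun _ => rfl) (fun _ => rfl) (σ n)]
    exact sub_var_t (f := Nat.succ) (g := id) (fun _ => rfl) (fun _ => rfl) (σ n)
  have hX2 : ∀ n, MCo.subst (upT MTm.var (fun n => match n with | 0 => e | n+1 => MCo.covar n)).1
      (upT MTm.var (fun n => match n with | 0 => e | n+1 => MCo.covar n)).2
      ((upT (upC σ MCo.covar).1 (upC σ MCo.covar).2).2 n)
      = econs (MCo.rename Nat.succ id e) MCo.covar n := by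
    intro n; match n with | 0 => rfl | n + 1 => rfl
  refine conf_congr (sub_sub_t hY1 hY2 Y) (congrArg MCo.mutilde (conf_congr ?_ rfl))
  show MTm.subst _ _ (MTm.subst (upT (upC σ MCo.covar).1 (upC σ MCo.covar).2).1
      (upT (upC σ MCo.covar).1 (upC σ MCo.covar).2).2 (MTm.rename Nat.succ id X)) = _
  rw [sub_ren_t (f := Nat.succ) (g := id)
        (τt := fun n => (upT (upC σ MCo.covar).1 (upC σ MCo.covar).2).1 (n+1))
        (τc := (upT (upC σ MCo.covar).1 (upC σ MCo.covar).2).2)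
        (fun _ => rfl) (fun _ => rfl) X]
  exact sub_sub_t hX1 hX2 X

/-- K3: the μ̃-step binding the evaluated argument of an application. -/
theorem K3 (σ : Nat → MTm) (X : MTm) (v : MTm) (e : MCo) :
    MMach.substTm (.conf (MTm.subst (fun n => MTm.rename Nat.succ id (σ n))
        (econs (MCo.rename Nat.succ id e) MCo.covar) X)
      (.cons (.var 0) (MCo.rename Nat.succ id e))) v
    = .conf (MTm.subst σ (econs e MCo.covar) X) (.cons v e) := by
  have he : MCo.subst (fun n => match n with | 0 => v | n+1 => MTm.var n) MCo.covar
      (MCo.rename Nat.succ id e) = e := by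
    rw [sub_ren_c (f := Nat.succ) (g := id) (τt := MTm.var) (τc := MCo.covar)
          (fun _ => rfl) (fun _ => rfl) e]
    exact sub_id_c (fun _ => rfl) (fun _ => rfl) e
  have h1 : ∀ n, MTm.subst (fun n => match n with | 0 => v | n+1 => MTm.var n) MCo.covar
      (MTm.rename Nat.succ id (σ n)) = σ n := by
    intro n
    rw [sub_ren_t (f := Nat.succ) (g := id) (τt := MTm.var) (τc := MCo.covar)
          (fun _ => rfl) (fun _ => rfl) (σ n)]
    exact sub_id_t (fun _ => rfl) (fun _ => rfl) (σ n)
  have h2 : ∀ n, MCo.subst (fun n => match n with | 0 => v | n+1 => MTm.var n) MCo.covar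
      (econs (MCo.rename Nat.succ id e) MCo.covar n) = econs e MCo.covar n := by
    intro n; match n with | 0 => exact he | n + 1 => rfl
  exact conf_congr (sub_sub_t h1 h2 X) (by show MCo.cons v _ = _; rw [he])

/-- K4: the μ-step of a translated case-expression. -/
theorem K4 (σ : Nat → MTm) (X₁ X₂ Y : MTm) (e : MCo) :
    MMach.substCo (.conf (MTm.subst (upC σ MCo.covar).1 (upC σ MCo.covar).2 Y)
      (.case (.conf (MTm.subst (upT (upC σ MCo.covar).1 (upC σ MCo.covar).2).1
                               (upT (upC σ MCo.covar).1 (upC σ MCo.covar).2).2 X₁) (.covar 0))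
             (.conf (MTm.subst (upT (upC σ MCo.covar).1 (upC σ MCo.covar).2).1
                               (upT (upC σ MCo.covar).1 (upC σ MCo.covar).2).2 X₂) (.covar 0)))) e
    = .conf (MTm.subst σ (econs e MCo.covar) Y)
        (.case (.conf (MTm.subst (scons (.var 0) (fun n => MTm.rename Nat.succ id (σ n)))
                  (econs (MCo.rename Nat.succ id e) MCo.covar) X₁) (MCo.rename Nat.succ id e))
               (.conf (MTm.subst (scons (.var 0) (fun n => MTm.rename Nat.succ id (σ n)))
                  (econs (MCo.rename Nat.succ id e) MCo.covar) X₂) (MCo.rename Nat.succ id e))) := by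
  have hY1 : ∀ n, MTm.subst MTm.var (fun n => match n with | 0 => e | n+1 => MCo.covar n)
      ((upC σ MCo.covar).1 n) = σ n := by
    intro n
    show MTm.subst _ _ (MTm.rename id Nat.succ (σ n)) = σ n
    rw [sub_ren_t (f := id) (g := Nat.succ) (τt := MTm.var) (τc := MCo.covar)
          (fun _ => rfl) (fun _ => rfl) (σ n)]
    exact sub_id_t (fun _ => rfl) (fun _ => rfl) (σ n)
  have hY2 : ∀ n, MCo.subst MTm.var (fun n => match n with | 0 => e | n+1 => MCo.covar n)
      ((upC σ MCo.covar).2 n) = econs e MCo.covar n := by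
    intro n; match n with | 0 => rfl | n + 1 => rfl
  have h1 : ∀ n, MTm.subst (upT MTm.var (fun n => match n with | 0 => e | n+1 => MCo.covar n)).1
      (upT MTm.var (fun n => match n with | 0 => e | n+1 => MCo.covar n)).2
      ((upT (upC σ MCo.covar).1 (upC σ MCo.covar).2).1 n)
      = scons (.var 0) (fun n => MTm.rename Nat.succ id (σ n)) n := by
    intro n
    match n with
    | 0 => rfl
    | n + 1 =>
      show MTm.subst _ _ (MTm.rename Nat.succ id (MTm.rename id Nat.succ (σ n))) = _
      rw [ren_ren_t (f1 := id) (g1 := Nat.succ) (f2 := Nat.succ) (g2 := id) (h := Nat.succ) (k := Nat.succ) (fun _ => rfl) (fun _ => rfl) (σ n),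
          sub_ren_t (f := Nat.succ) (g := Nat.succ)
          (σt := (upT MTm.var (fun n => match n with | 0 => e | n+1 => MCo.covar n)).1)
          (σc := (upT MTm.var (fun n => match n with | 0 => e | n+1 => MCo.covar n)).2)
          (τt := fun n => MTm.var (n+1)) (τc := MCo.covar)
            (fun _ => rfl) (fun _ => rfl) (σ n)]
      exact sub_var_t (f := Nat.succ) (g := id) (fun _ => rfl) (fun _ => rfl) (σ n)
  have h2 : ∀ n, MCo.subst (upT MTm.var (fun n => match n with | 0 => e | n+1 => MCo.covar n)).1
      (upT MTm.var (fun n => match n with | 0 => e | n+1 => MCo.covar n)).2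
      ((upT (upC σ MCo.covar).1 (upC σ MCo.covar).2).2 n)
      = econs (MCo.rename Nat.succ id e) MCo.covar n := by
    intro n; match n with | 0 => rfl | n + 1 => rfl
  refine conf_congr (sub_sub_t hY1 hY2 Y) ?_
  show MCo.case (.conf _ _) (.conf _ _) = _
  rw [sub_sub_t h1 h2 X₁, sub_sub_t h1 h2 X₂]
  rfl

/-- K5: the case-branch step binding the injected value. -/
theorem K5 (σ : Nat → MTm) (X : MTm) (u : MTm) (e : MCo) :
    MMach.substTm (.conf (MTm.subst (scons (.var 0) (fun n => MTm.rename Nat.succ id (σ n)))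
        (econs (MCo.rename Nat.succ id e) MCo.covar) X) (MCo.rename Nat.succ id e)) u
    = .conf (MTm.subst (scons u σ) (econs e MCo.covar) X) e := by
  have he : MCo.subst (fun n => match n with | 0 => u | n+1 => MTm.var n) MCo.covar
      (MCo.rename Nat.succ id e) = e := by
    rw [sub_ren_c (f := Nat.succ) (g := id) (τt := MTm.var) (τc := MCo.covar)
          (fun _ => rfl) (fun _ => rfl) e]
    exact sub_id_c (fun _ => rfl) (fun _ => rfl) e
  have h1 : ∀ n, MTm.subst (fun n => match n with | 0 => u | n+1 => MTm.var n) MCo.covar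
      (scons (.var 0) (fun n => MTm.rename Nat.succ id (σ n)) n) = scons u σ n := by
    intro n
    match n with
    | 0 => rfl
    | n + 1 =>
      show MTm.subst _ _ (MTm.rename Nat.succ id (σ n)) = σ n
      rw [sub_ren_t (f := Nat.succ) (g := id) (τt := MTm.var) (τc := MCo.covar)
            (fun _ => rfl) (fun _ => rfl) (σ n)]
      exact sub_id_t (fun _ => rfl) (fun _ => rfl) (σ n)
  have h2 : ∀ n, MCo.subst (fun n => match n with | 0 => u | n+1 => MTm.var n) MCo.covar
      (econs (MCo.rename Nat.succ id e) MCo.covar n) = econs e MCo.covar n := by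
    intro n; match n with | 0 => exact he | n + 1 => rfl
  exact conf_congr (sub_sub_t h1 h2 X) he

/- ## Adequacy with full truth-witness environments -/

theorem adequacy_aux (pole : MMach → Prop)
    (hpole : ∀ m m', StepM m m' → pole m' → pole m)
    (baseTruv : Set MTm) :
    ∀ {Γ : List Ty} {t : LTm} {A : Ty}, HasTy Γ t A →
    ∀ (σ : Nat → MTm), (∀ n B, Γ[n]? = some B → σ n ∈ tru pole baseTruv B) →
    MTm.subst σ MCo.covar (translV t) ∈ tru pole baseTruv A := by
  intro Γ t A ht
  induction ht with
  | @var Γ n A h =>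
      intro σ hσ
      exact hσ n A h
  | @lam Γ t A B h IH =>
      intro σ hσ c hc
      obtain ⟨v, ev, rfl, hv, he⟩ := hc
      have step : StepM (.conf (MTm.subst σ MCo.covar (translV (.lam t))) (.cons v ev))
          (.conf (MTm.subst (scons v σ) (econs ev MCo.covar) (translV t)) ev) := by
        have h' := StepM.muPair (.conf
            (MTm.subst (upT (upC σ MCo.covar).1 (upC σ MCo.covar).2).1
              (upT (upC σ MCo.covar).1 (upC σ MCo.covar).2).2 (translV t)) (.covar 0)) v ev
        rw [K1] at h'
        exact h'
      refine hpole _ _ step ?_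
      have hmem : MTm.subst (scons v σ) MCo.covar (translV t) ∈ tru pole baseTruv B := by
        refine IH (scons v σ) ?_
        intro n C hC
        match n with
        | 0 => exact (Option.some.inj hC) ▸ truv_sub_tru pole baseTruv A hv
        | n + 1 => exact hσ n C hC
      rw [translV_coirrel t (scons v σ) (econs ev MCo.covar) MCo.covar]
      exact he _ hmem
  | @app Γ t u A B h1 h2 IHt IHu =>
      intro σ hσ
      refine tru_intro pole baseTruv B ?_
      intro e he
      have step : StepM (.conf (MTm.subst σ MCo.covar (translV (.app t u))) e)
          (.conf (MTm.subst σ (econs e MCo.covar) (translV u))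
            (.mutilde (.conf (MTm.subst (fun n => MTm.rename Nat.succ id (σ n))
                (econs (MCo.rename Nat.succ id e) MCo.covar) (translV t))
              (.cons (.var 0) (MCo.rename Nat.succ id e))))) := by
        have h' := StepM.mu (.conf
            (MTm.subst (upC σ MCo.covar).1 (upC σ MCo.covar).2 (translV u))
            (.mutilde (.conf
              (MTm.subst (upT (upC σ MCo.covar).1 (upC σ MCo.covar).2).1
                         (upT (upC σ MCo.covar).1 (upC σ MCo.covar).2).2
                (MTm.rename Nat.succ id (translV t)))
              (.cons (.var 0) (.covar 0))))) e
        rw [K2] at h'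
        exact h'
      refine hpole _ _ step ?_
      have hu : MTm.subst σ (econs e MCo.covar) (translV u) ∈ tru pole baseTruv A := by
        rw [translV_coirrel u σ (econs e MCo.covar) MCo.covar]
        exact IHu σ hσ
      refine tru_elim pole baseTruv A hu ?_
      intro v hv
      have step2 : StepM (.conf v (.mutilde (.conf
            (MTm.subst (fun n => MTm.rename Nat.succ id (σ n))
              (econs (MCo.rename Nat.succ id e) MCo.covar) (translV t))
            (.cons (.var 0) (MCo.rename Nat.succ id e)))))
          (.conf (MTm.subst σ (econs e MCo.covar) (translV t)) (.cons v e)) := by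
        have h' := StepM.mutilde v (.conf
            (MTm.subst (fun n => MTm.rename Nat.succ id (σ n))
              (econs (MCo.rename Nat.succ id e) MCo.covar) (translV t))
            (.cons (.var 0) (MCo.rename Nat.succ id e)))
        rw [K3] at h'
        exact h'
      refine hpole _ _ step2 ?_
      have htt : MTm.subst σ (econs e MCo.covar) (translV t)
          ∈ tru pole baseTruv (.arrow A B) := by
        rw [translV_coirrel t σ (econs e MCo.covar) MCo.covar]
        exact IHt σ hσ
      exact htt (.cons v e) ⟨v, e, rfl, hv, orthC_truv_tru pole baseTruv B he⟩
  | @injl Γ t A B h IH =>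
      intro σ hσ e he
      exact he _ (Or.inl ⟨MTm.subst σ MCo.covar (translV t), rfl, IH σ hσ⟩)
  | @injr Γ t A B h IH =>
      intro σ hσ e he
      exact he _ (Or.inr ⟨MTm.subst σ MCo.covar (translV t), rfl, IH σ hσ⟩)
  | @case Γ t u₁ u₂ A B C h h1 h2 IHt IH1 IH2 =>
      intro σ hσ
      refine tru_intro pole baseTruv C ?_
      intro e he
      have step : StepM (.conf (MTm.subst σ MCo.covar (translV (.case t u₁ u₂))) e)
          (.conf (MTm.subst σ (econs e MCo.covar) (translV t))
            (.case (.conf (MTm.subst (scons (.var 0) (fun n => MTm.rename Nat.succ id (σ n)))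
                      (econs (MCo.rename Nat.succ id e) MCo.covar) (translV u₁))
                    (MCo.rename Nat.succ id e))
                   (.conf (MTm.subst (scons (.var 0) (fun n => MTm.rename Nat.succ id (σ n)))
                      (econs (MCo.rename Nat.succ id e) MCo.covar) (translV u₂))
                    (MCo.rename Nat.succ id e)))) := by
        have h' := StepM.mu (.conf
            (MTm.subst (upC σ MCo.covar).1 (upC σ MCo.covar).2 (translV t))
            (.case (.conf (MTm.subst (upT (upC σ MCo.covar).1 (upC σ MCo.covar).2).1
                      (upT (upC σ MCo.covar).1 (upC σ MCo.covar).2).2 (translV u₁)) (.covar 0))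
                   (.conf (MTm.subst (upT (upC σ MCo.covar).1 (upC σ MCo.covar).2).1
                      (upT (upC σ MCo.covar).1 (upC σ MCo.covar).2).2 (translV u₂)) (.covar 0)))) e
        rw [K4] at h'
        exact h'
      refine hpole _ _ step ?_
      have htt : MTm.subst σ (econs e MCo.covar) (translV t)
          ∈ tru pole baseTruv (.sum A B) := by
        rw [translV_coirrel t σ (econs e MCo.covar) MCo.covar]
        exact IHt σ hσ
      refine tru_elim pole baseTruv (.sum A B) htt ?_
      intro v hv
      cases hv with
      | inl hu =>
          obtain ⟨u, rfl, hu⟩ := hu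
          have step2 := StepM.casel u
            (.conf (MTm.subst (scons (.var 0) (fun n => MTm.rename Nat.succ id (σ n)))
              (econs (MCo.rename Nat.succ id e) MCo.covar) (translV u₁))
              (MCo.rename Nat.succ id e))
            (.conf (MTm.subst (scons (.var 0) (fun n => MTm.rename Nat.succ id (σ n)))
              (econs (MCo.rename Nat.succ id e) MCo.covar) (translV u₂))
              (MCo.rename Nat.succ id e))
          rw [K5] at step2
          refine hpole _ _ step2 ?_
          have hmem : MTm.subst (scons u σ) MCo.covar (translV u₁) ∈ tru pole baseTruv C := by
            refine IH1 (scons u σ) ?_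
            intro n D hD
            match n with
            | 0 => exact (Option.some.inj hD) ▸ hu
            | n + 1 => exact hσ n D hD
          rw [translV_coirrel u₁ (scons u σ) (econs e MCo.covar) MCo.covar]
          exact tru_elim pole baseTruv C hmem he
      | inr hu =>
          obtain ⟨u, rfl, hu⟩ := hu
          have step2 := StepM.caser u
            (.conf (MTm.subst (scons (.var 0) (fun n => MTm.rename Nat.succ id (σ n)))
              (econs (MCo.rename Nat.succ id e) MCo.covar) (translV u₁))
              (MCo.rename Nat.succ id e))
            (.conf (MTm.subst (scons (.var 0) (fun n => MTm.rename Nat.succ id (σ n)))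
              (econs (MCo.rename Nat.succ id e) MCo.covar) (translV u₂))
              (MCo.rename Nat.succ id e))
          rw [K5] at step2
          refine hpole _ _ step2 ?_
          have hmem : MTm.subst (scons u σ) MCo.covar (translV u₂) ∈ tru pole baseTruv C := by
            refine IH2 (scons u σ) ?_
            intro n D hD
            match n with
            | 0 => exact (Option.some.inj hD) ▸ hu
            | n + 1 => exact hσ n D hD
          rw [translV_coirrel u₂ (scons u σ) (econs e MCo.covar) MCo.covar]
          exact tru_elim pole baseTruv C hmem he

end Adeq

/-- Call-by-value adequacy: if Γ ⊢ t : A and σ maps each (x:B) ∈ Γ to a truth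
*value* witness of B, then the call-by-value translation satisfies
⟦t⟧[σ] ∈ |A|, for any pole closed under anti-reduction. -/
theorem adequacy_cbv (pole : MMach → Prop)
    (hpole : ∀ m m', StepM m m' → pole m' → pole m)
    (baseTruv : Set MTm)
    {Γ : List Ty} {t : LTm} {A : Ty} (ht : HasTy Γ t A)
    (σ : Nat → MTm) (hσ : ∀ n B, Γ[n]? = some B → σ n ∈ truv pole baseTruv B) :
    MTm.subst σ MCo.covar (translV t) ∈ tru pole baseTruv A :=
  Adeq.adequacy_aux pole hpole baseTruv ht σ
    (fun n B h => Adeq.truv_sub_tru pole baseTruv B (hσ n B h))
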